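/- A T0 space is well-filtered if and only if it is saturated well-filtered. -/

import Mathlib

open Set

def RelCpt {X : Type*} [TopologicalSpace X] (A B : Set X) : Prop :=
  A ⊆ B ∧ ∀ 𝒰 : Set (Set X), (∀ U ∈ 𝒰, IsOpen U) → B ⊆ ⋃₀ 𝒰 →
    ∃ 𝒱 ⊆ 𝒰, 𝒱.Finite ∧ A ⊆ ⋃₀ 𝒱

def Saturated {X : Type*} [TopologicalSpace X] (A : Set X) : Prop :=
  A = ⋂₀ {U : Set X | IsOpen U ∧ A ⊆ U}

def WellFiltered (X : Type*) [TopologicalSpace X] : Prop :=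
  ∀ 𝒦 : Set (Set X), 𝒦.Nonempty →
    (∀ K ∈ 𝒦, IsCompact K ∧ Saturated K) →
    (∀ K₁ ∈ 𝒦, ∀ K₂ ∈ 𝒦, ∃ K₃ ∈ 𝒦, K₃ ⊆ K₁ ∧ K₃ ⊆ K₂) →
    ∀ U : Set X, IsOpen U → ⋂₀ 𝒦 ⊆ U → ∃ K ∈ 𝒦, K ⊆ U

def OmegaWellFiltered (X : Type*) [TopologicalSpace X] : Prop :=
  ∀ K : ℕ → Set X, (∀ n, IsCompact (K n) ∧ Saturated (K n)) →
    (∀ m n : ℕ, ∃ k, K k ⊆ K m ∧ K k ⊆ K n) →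
    ∀ U : Set X, IsOpen U → (⋂ n, K n) ⊆ U → ∃ n, K n ⊆ U

def SatWellFiltered (X : Type*) [TopologicalSpace X] : Prop :=
  ∀ 𝒜 : Set (Set X), 𝒜.Nonempty →
    (∀ A ∈ 𝒜, Saturated A) →
    (∀ A₁ ∈ 𝒜, ∀ A₂ ∈ 𝒜, ∃ A₃ ∈ 𝒜, RelCpt A₃ A₁ ∧ RelCpt A₃ A₂) →
    ∀ U : Set X, IsOpen U → ⋂₀ 𝒜 ⊆ U → ∃ A ∈ 𝒜, A ⊆ U

def SatOmegaWellFiltered (X : Type*) [TopologicalSpace X] : Prop :=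
  ∀ A : ℕ → Set X, (∀ n, Saturated (A n)) →
    (∀ m n : ℕ, ∃ k, RelCpt (A k) (A m) ∧ RelCpt (A k) (A n)) →
    ∀ U : Set X, IsOpen U → (⋂ n, A n) ⊆ U → ∃ n, A n ⊆ U

def OpenWellFiltered (X : Type*) [TopologicalSpace X] : Prop :=
  ∀ 𝒜 : Set (Set X), 𝒜.Nonempty →
    (∀ A ∈ 𝒜, IsOpen A) →
    (∀ A₁ ∈ 𝒜, ∀ A₂ ∈ 𝒜, ∃ A₃ ∈ 𝒜, RelCpt A₃ A₁ ∧ RelCpt A₃ A₂) →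
    ∀ U : Set X, IsOpen U → ⋂₀ 𝒜 ⊆ U → ∃ A ∈ 𝒜, A ⊆ U

def OpenOmegaWellFiltered (X : Type*) [TopologicalSpace X] : Prop :=
  ∀ A : ℕ → Set X, (∀ n, IsOpen (A n)) →
    (∀ m n : ℕ, ∃ k, RelCpt (A k) (A m) ∧ RelCpt (A k) (A n)) →
    ∀ U : Set X, IsOpen U → (⋂ n, A n) ⊆ U → ∃ n, A n ⊆ U

def CoreCompact (X : Type*) [TopologicalSpace X] : Prop :=
  ∀ (x : X) (U : Set X), IsOpen U → x ∈ U → ∃ V : Set X, IsOpen V ∧ x ∈ V ∧ RelCpt V U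

def Sober (X : Type*) [TopologicalSpace X] : Prop :=
  ∀ F : Set X, IsClosed F → F.Nonempty →
    (∀ F₁ F₂ : Set X, IsClosed F₁ → IsClosed F₂ → F ⊆ F₁ ∪ F₂ → F ⊆ F₁ ∨ F ⊆ F₂) →
    ∃! x : X, F = closure {x}

section Aux

variable {X : Type*} [TopologicalSpace X]

def satur (S : Set X) : Set X := ⋂₀ {V : Set X | IsOpen V ∧ S ⊆ V}

lemma subset_satur {S : Set X} : S ⊆ satur S := by
  intro x hx
  exact fun V hV => hV.2 hx

lemma satur_subset_open {S V : Set X} (hV : IsOpen V) (h : S ⊆ V) : satur S ⊆ V :=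
  sInter_subset_of_mem ⟨hV, h⟩

lemma satur_mono {S T : Set X} (h : S ⊆ T) : satur S ⊆ satur T := by
  intro x hx V hV
  exact hx V ⟨hV.1, h.trans hV.2⟩

lemma satur_saturated (S : Set X) : Saturated (satur S) := by
  apply Subset.antisymm
  · intro x hx V hV
    exact hV.2 hx
  · intro x hx V hV
    exact hx V ⟨hV.1, satur_subset_open hV.1 hV.2⟩

lemma satur_subset_saturated {S A : Set X} (hA : Saturated A) (h : S ⊆ A) : satur S ⊆ A := by
  rw [hA]
  intro x hx V hV
  exact hx V ⟨hV.1, h.trans hV.2⟩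

lemma saturated_iInter {A : ℕ → Set X} (h : ∀ n, Saturated (A n)) : Saturated (⋂ n, A n) := by
  apply Subset.antisymm
  · intro x hx V hV
    exact hV.2 hx
  · intro x hx
    refine mem_iInter.2 fun n => ?_
    rw [h n]
    intro V hV
    exact hx V ⟨hV.1, (iInter_subset A n).trans hV.2⟩

private lemma chain_finite_min {α : Type*} {c : Set (Set α)} (hc : IsChain (· ⊆ ·) c)
    {s : Set (Set α)} (hfin : s.Finite) :
    s ⊆ c → s.Nonempty → ∃ C ∈ s, ∀ D ∈ s, C ⊆ D := by
  refine Set.Finite.induction_on (motive := fun s _ => s ⊆ c → s.Nonempty → ∃ C ∈ s, ∀ D ∈ s, C ⊆ D)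
    s hfin (fun _ h => absurd h (by simp)) ?_
  rintro a s ha hs ih hsub hne
  rcases s.eq_empty_or_nonempty with rfl | hsne
  · exact ⟨a, mem_insert _ _, by simp⟩
  · obtain ⟨C, hCs, hCmin⟩ := ih (fun x hx => hsub (mem_insert_of_mem _ hx)) hsne
    rcases eq_or_ne a C with rfl | hne'
    · refine ⟨a, mem_insert _ _, fun D hD => ?_⟩
      rcases mem_insert_iff.1 hD with rfl | hD
      · exact Subset.rfl
      · exact hCmin D hD
    · rcases hc (hsub (mem_insert _ _)) (hsub (mem_insert_of_mem _ hCs)) hne' with haC | hCa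
      · refine ⟨a, mem_insert _ _, fun D hD => ?_⟩
        rcases mem_insert_iff.1 hD with rfl | hD
        · exact Subset.rfl
        · exact haC.trans (hCmin D hD)
      · refine ⟨C, mem_insert_of_mem _ hCs, fun D hD => ?_⟩
        rcases mem_insert_iff.1 hD with rfl | hD
        · exact hCa
        · exact hCmin D hD

/-- The key ω-lemma: in a well-filtered space, if `(A n)` is a sequence of saturated sets with
`A (n+1)` way-below `A n`, and the intersection is contained in an open `W`, then some `A n ⊆ W`. -/
lemma omega_lemma (hWF : WellFiltered X) (A : ℕ → Set X)
    (hsat : ∀ n, Saturated (A n)) (hrel : ∀ n, RelCpt (A (n + 1)) (A n))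
    (W : Set X) (hW : IsOpen W) (hsubW : (⋂ n, A n) ⊆ W) : ∃ n, A n ⊆ W := by
  classical
  by_contra hcon
  push_neg at hcon
  have hAne : ∀ n, (A n \ W).Nonempty := fun n => diff_nonempty.2 (hcon n)
  have hmono : ∀ m n : ℕ, m ≤ n → A n ⊆ A m := by
    intro m n h
    induction n, h using Nat.le_induction with
    | base => exact Subset.rfl
    | succ n hmn ih => exact (hrel n).1.trans ih
  set Z : Set (Set X) := {C | IsClosed C ∧ C ⊆ Wᶜ ∧ ∀ n, (C ∩ A n).Nonempty} with hZdef
  have hWc : Wᶜ ∈ Z := by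
    refine ⟨hW.isClosed_compl, Subset.rfl, fun n => ?_⟩
    obtain ⟨q, hq⟩ := hAne n
    exact ⟨q, hq.2, hq.1⟩
  have hchain : ∀ c ⊆ Z, IsChain (· ⊆ ·) c → c.Nonempty → ∃ lb ∈ Z, ∀ s ∈ c, lb ⊆ s := by
    rintro c hcZ hchn ⟨C₀, hC₀⟩
    refine ⟨⋂₀ c, ⟨isClosed_sInter fun C hC => (hcZ hC).1,
      (sInter_subset_of_mem hC₀).trans (hcZ hC₀).2.1, fun n => ?_⟩,
      fun s hs => sInter_subset_of_mem hs⟩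
    by_contra hemp
    rw [Set.not_nonempty_iff_eq_empty] at hemp
    have hcov : A n ⊆ ⋃₀ (compl '' c) := by
      rw [← compl_sInter]
      intro q hq
      by_contra hqc
      rw [mem_compl_iff, not_not] at hqc
      have hmem : q ∈ ⋂₀ c ∩ A n := ⟨hqc, hq⟩
      rw [hemp] at hmem
      exact hmem
    obtain ⟨𝒱, h𝒱sub, h𝒱fin, h𝒱cov⟩ := (hrel n).2 (compl '' c)
      (by rintro V ⟨C, hC, rfl⟩; exact (hcZ hC).1.isOpen_compl) hcov
    rcases 𝒱.eq_empty_or_nonempty with rfl | h𝒱ne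
    · obtain ⟨q, hq⟩ := (hcZ hC₀).2.2 (n + 1)
      exact absurd (h𝒱cov hq.2) (by simp)
    · have h1 : compl '' 𝒱 ⊆ c := by
        rintro D ⟨V, hV, rfl⟩
        obtain ⟨C, hC, rfl⟩ := h𝒱sub hV
        rwa [compl_compl]
      obtain ⟨C, hCmem, hCmin⟩ := chain_finite_min hchn (h𝒱fin.image compl) h1 (h𝒱ne.image _)
      obtain ⟨q, hqC, hqA⟩ := (hcZ (h1 hCmem)).2.2 (n + 1)
      obtain ⟨V, hV𝒱, hqV⟩ := h𝒱cov hqA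
      exact (hCmin Vᶜ (mem_image_of_mem compl hV𝒱)) hqC hqV
  obtain ⟨E, -, hEmin⟩ := zorn_superset_nonempty Z hchain Wᶜ hWc
  have hEZ : E ∈ Z := hEmin.prop
  have hP1 : ∀ V : Set X, IsOpen V → (V ∩ E).Nonempty → ∃ k, E ∩ A k ⊆ V := by
    intro V hV hVE
    by_contra hno
    push_neg at hno
    have hmem : E \ V ∈ Z := by
      refine ⟨hEZ.1.sdiff hV, diff_subset.trans hEZ.2.1, fun k => ?_⟩
      obtain ⟨q, hq, hqV⟩ := not_subset.1 (hno k)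
      exact ⟨q, ⟨hq.1, hqV⟩, hq.2⟩
    obtain ⟨q, hqV, hqE⟩ := hVE
    exact (hEmin.2 hmem diff_subset hqE).2 hqV
  choose x hx using fun n => hEZ.2.2 n
  have hDcpt : ∀ n, IsCompact (x '' Ici n) := by
    intro n
    refine isCompact_of_finite_subcover fun {ι} U hUo hcov => ?_
    obtain ⟨i₀, hi₀⟩ := mem_iUnion.1 (hcov ⟨n, self_mem_Ici, rfl⟩)
    obtain ⟨k, hk⟩ := hP1 (U i₀) (hUo i₀) ⟨x n, hi₀, (hx n).1⟩
    have hchoice : ∀ m, n ≤ m → ∃ i, x m ∈ U i := fun m hm => mem_iUnion.1 (hcov ⟨m, hm, rfl⟩)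
    have : Nonempty ι := ⟨i₀⟩
    choose! f hf using hchoice
    refine ⟨insert i₀ ((Finset.Ico n k).image f), ?_⟩
    rintro q ⟨m, hm, rfl⟩
    rcases le_or_gt k m with hkm | hmk
    · exact mem_iUnion₂.2 ⟨i₀, Finset.mem_insert_self _ _,
        hk ⟨(hx m).1, hmono k m hkm (hx m).2⟩⟩
    · exact mem_iUnion₂.2 ⟨f m, Finset.mem_insert_of_mem
        (Finset.mem_image_of_mem f (Finset.mem_Ico.2 ⟨hm, hmk⟩)), hf m hm⟩
  have hKcpt : ∀ n, IsCompact (satur (x '' Ici n)) := by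
    intro n
    refine isCompact_of_finite_subcover fun {ι} U hUo hcov => ?_
    obtain ⟨t, ht⟩ := (hDcpt n).elim_finite_subcover U hUo (subset_satur.trans hcov)
    exact ⟨t, satur_subset_open (isOpen_biUnion fun i _ => hUo i) ht⟩
  have hKA : ∀ n, satur (x '' Ici n) ⊆ A n := fun n =>
    satur_subset_saturated (hsat n) (by rintro q ⟨m, hm, rfl⟩; exact hmono n m hm (hx m).2)
  have hIsub : ⋂₀ (range fun n => satur (x '' Ici n)) ⊆ W := by
    intro q hq
    exact hsubW (mem_iInter.2 fun n => hKA n (hq _ ⟨n, rfl⟩))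
  obtain ⟨K, hKmem, hKW⟩ := hWF (range fun n => satur (x '' Ici n)) (range_nonempty _)
    (by rintro K ⟨n, rfl⟩; exact ⟨hKcpt n, satur_saturated _⟩)
    (by
      rintro K₁ ⟨n₁, rfl⟩ K₂ ⟨n₂, rfl⟩
      exact ⟨satur (x '' Ici (max n₁ n₂)), ⟨max n₁ n₂, rfl⟩,
        satur_mono (image_mono (f := x) (Ici_subset_Ici.2 (le_max_left _ _))),
        satur_mono (image_mono (f := x) (Ici_subset_Ici.2 (le_max_right _ _)))⟩)
    W hW hIsub
  obtain ⟨n, rfl⟩ := hKmem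
  exact (hEZ.2.1 (hx n).1) (hKW (subset_satur ⟨n, self_mem_Ici, rfl⟩))

end Aux

section Aux2

variable {X : Type*} [TopologicalSpace X]

/-- The intersection of an ω-descending ≪-sequence of saturated sets is compact. -/
lemma iInter_compact (hWF : WellFiltered X) (A : ℕ → Set X)
    (hsat : ∀ n, Saturated (A n)) (hrel : ∀ n, RelCpt (A (n + 1)) (A n)) :
    IsCompact (⋂ n, A n) := by
  classical
  refine isCompact_of_finite_subcover fun {ι} U hUo hcov => ?_
  obtain ⟨n, hn⟩ := omega_lemma hWF A hsat hrel (⋃ i, U i) (isOpen_iUnion hUo) hcov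
  obtain ⟨𝒱, h𝒱sub, h𝒱fin, h𝒱cov⟩ := (hrel n).2 (range U)
    (by rintro V ⟨i, rfl⟩; exact hUo i) (by rwa [sUnion_range])
  have hchoice : ∀ V ∈ 𝒱, ∃ i, U i = V := fun V hV => h𝒱sub hV
  by_cases hι : Nonempty ι
  · choose! g hg using hchoice
    refine ⟨h𝒱fin.toFinset.image g, ?_⟩
    intro q hq
    obtain ⟨V, hV, hqV⟩ := h𝒱cov ((iInter_subset A (n + 1)) hq)
    refine mem_iUnion₂.2 ⟨g V, Finset.mem_image_of_mem g (h𝒱fin.mem_toFinset.2 hV), ?_⟩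
    rw [hg V hV]
    exact hqV
  · refine ⟨∅, ?_⟩
    intro q hq
    obtain ⟨V, hV, hqV⟩ := h𝒱cov ((iInter_subset A (n + 1)) hq)
    obtain ⟨i, -⟩ := h𝒱sub hV
    exact absurd ⟨i⟩ hι

end Aux2

/-- A T0 space is well-filtered iff it is saturated well-filtered. -/
theorem stmt7 (X : Type*) [TopologicalSpace X] [T0Space X] :
    WellFiltered X ↔ SatWellFiltered X := by
  constructor
  · -- the hard direction
    intro hWF 𝒜 hne hsat hfil U hU hsub
    classical
    have hstep : ∀ A : Set X, A ∈ 𝒜 → ∃ B, B ∈ 𝒜 ∧ RelCpt B A := by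
      intro A hA
      obtain ⟨B, hB, h1, -⟩ := hfil A hA A hA
      exact ⟨B, hB, h1⟩
    have hpair : ∀ A B : Set X, A ∈ 𝒜 → B ∈ 𝒜 → ∃ C, C ∈ 𝒜 ∧ RelCpt C A ∧ RelCpt C B := by
      intro A B hA hB
      obtain ⟨C, hC, h1, h2⟩ := hfil A hA B hB
      exact ⟨C, hC, h1, h2⟩
    choose! g hg𝒜 hgrel using hstep
    choose! p hp𝒜 hp1 hp2 using hpair
    -- canonical ≪-sequence below a member
    have hseq𝒜 : ∀ A, A ∈ 𝒜 → ∀ n, g^[n] A ∈ 𝒜 := by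
      intro A hA n
      induction n with
      | zero => simpa
      | succ n ih =>
          rw [Function.iterate_succ_apply']
          exact hg𝒜 _ ih
    have hseqrel : ∀ A, A ∈ 𝒜 → ∀ n, RelCpt (g^[n + 1] A) (g^[n] A) := by
      intro A hA n
      rw [Function.iterate_succ_apply']
      exact hgrel _ (hseq𝒜 A hA n)
    set 𝒬 : Set (Set X) :=
      {Q | ∃ f : ℕ → Set X, (∀ n, f n ∈ 𝒜) ∧ (∀ n, RelCpt (f (n + 1)) (f n)) ∧ Q = ⋂ n, f n}
      with h𝒬def
    obtain ⟨A₀, hA₀⟩ := hne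
    have hQne : 𝒬.Nonempty :=
      ⟨⋂ n, g^[n] A₀, fun n => g^[n] A₀, hseq𝒜 A₀ hA₀, hseqrel A₀ hA₀, rfl⟩
    have hQcs : ∀ Q ∈ 𝒬, IsCompact Q ∧ Saturated Q := by
      rintro Q ⟨f, hf𝒜, hfrel, rfl⟩
      exact ⟨iInter_compact hWF f (fun n => hsat _ (hf𝒜 n)) hfrel,
        saturated_iInter fun n => hsat _ (hf𝒜 n)⟩
    have hQfil : ∀ Q₁ ∈ 𝒬, ∀ Q₂ ∈ 𝒬, ∃ Q₃ ∈ 𝒬, Q₃ ⊆ Q₁ ∧ Q₃ ⊆ Q₂ := by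
      rintro Q₁ ⟨f₁, hf₁𝒜, hf₁rel, rfl⟩ Q₂ ⟨f₂, hf₂𝒜, hf₂rel, rfl⟩
      -- merged sequence
      let m : ℕ → Set X := fun n =>
        Nat.rec (p (f₁ 0) (f₂ 0)) (fun n ih => p (p (f₁ (n + 1)) (f₂ (n + 1))) ih) n
      have hm0 : m 0 = p (f₁ 0) (f₂ 0) := rfl
      have hmsucc : ∀ n, m (n + 1) = p (p (f₁ (n + 1)) (f₂ (n + 1))) (m n) := fun n => rfl
      have hm𝒜 : ∀ n, m n ∈ 𝒜 := by
        intro n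
        induction n with
        | zero => rw [hm0]; exact hp𝒜 _ _ (hf₁𝒜 0) (hf₂𝒜 0)
        | succ n ih =>
            rw [hmsucc]
            exact hp𝒜 _ _ (hp𝒜 _ _ (hf₁𝒜 (n + 1)) (hf₂𝒜 (n + 1))) ih
      have hmrel : ∀ n, RelCpt (m (n + 1)) (m n) := by
        intro n
        rw [hmsucc]
        exact hp2 _ _ (hp𝒜 _ _ (hf₁𝒜 (n + 1)) (hf₂𝒜 (n + 1))) (hm𝒜 n)
      have hmsub1 : ∀ n, m n ⊆ f₁ n := by
        intro n
        cases n with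
        | zero => rw [hm0]; exact (hp1 _ _ (hf₁𝒜 0) (hf₂𝒜 0)).1
        | succ n =>
            rw [hmsucc]
            exact ((hp1 _ _ (hp𝒜 _ _ (hf₁𝒜 (n + 1)) (hf₂𝒜 (n + 1))) (hm𝒜 n)).1).trans
              (hp1 _ _ (hf₁𝒜 (n + 1)) (hf₂𝒜 (n + 1))).1
      have hmsub2 : ∀ n, m n ⊆ f₂ n := by
        intro n
        cases n with
        | zero => rw [hm0]; exact (hp2 _ _ (hf₁𝒜 0) (hf₂𝒜 0)).1
        | succ n =>
            rw [hmsucc]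
            exact ((hp1 _ _ (hp𝒜 _ _ (hf₁𝒜 (n + 1)) (hf₂𝒜 (n + 1))) (hm𝒜 n)).1).trans
              (hp2 _ _ (hf₁𝒜 (n + 1)) (hf₂𝒜 (n + 1))).1
      exact ⟨⋂ n, m n, ⟨m, hm𝒜, hmrel, rfl⟩,
        iInter_mono hmsub1, iInter_mono hmsub2⟩
    have hQsub : ⋂₀ 𝒬 ⊆ U := by
      intro q hq
      refine hsub (fun A hA => ?_)
      have hmem : q ∈ ⋂ n, g^[n] A := hq _ ⟨fun n => g^[n] A, hseq𝒜 A hA, hseqrel A hA, rfl⟩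
      simpa using mem_iInter.1 hmem 0
    obtain ⟨Q, hQmem, hQU⟩ := hWF 𝒬 hQne hQcs hQfil U hU hQsub
    obtain ⟨f, hf𝒜, hfrel, rfl⟩ := hQmem
    obtain ⟨n, hn⟩ := omega_lemma hWF f (fun n => hsat _ (hf𝒜 n)) hfrel U hU hQU
    exact ⟨f n, hf𝒜 n, hn⟩
  · -- the easy direction
    intro hS 𝒦 hne hcs hfil U hU hsub
    refine hS 𝒦 hne (fun K hK => (hcs K hK).2) ?_ U hU hsub
    intro K₁ hK₁ K₂ hK₂
    obtain ⟨K₃, hK₃, hs1, hs2⟩ := hfil K₁ hK₁ K₂ hK₂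
    have hcpt : IsCompact K₃ := (hcs K₃ hK₃).1
    have hrc : ∀ K : Set X, K₃ ⊆ K → RelCpt K₃ K := by
      intro K hsubK
      refine ⟨hsubK, fun 𝒰 h𝒰 hcov => ?_⟩
      obtain ⟨t, ht⟩ := hcpt.elim_finite_subcover (fun V : 𝒰 => (V : Set X))
        (fun V => h𝒰 V.1 V.2) (by rw [← sUnion_eq_iUnion]; exact hsubK.trans hcov)
      refine ⟨Subtype.val '' (t : Set ↥𝒰), ?_, ?_, ?_⟩
      · rintro V ⟨W, -, rfl⟩
        exact W.2
      · exact t.finite_toSet.image Subtype.val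
      · rwa [sUnion_image]
    exact ⟨K₃, hK₃, hrc K₁ hs1, hrc K₂ hs2⟩
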